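/- The block matrix B = [[0, I], [-F̄₁, -F̄₂]] with F̄₁ = M₀⁻¹K₀ and F̄₂ = -M₀⁻¹(J̄₀ - R̄₀), where M₀, K₀ are symmetric positive definite, J̄₀ is skew-symmetric, and R̄₀ is symmetric positive definite, is Hurwitz: every eigenvalue of B has strictly negative real part. -/

import Mathlib

open Matrix

lemma re_dot {n : ℕ} (M : Matrix (Fin n) (Fin n) ℝ) (x : Fin n → ℂ) :
    (star x ⬝ᵥ (M.map Complex.ofReal).mulVec x).re =
      (fun i => (x i).re) ⬝ᵥ M.mulVec (fun i => (x i).re) +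
      (fun i => (x i).im) ⬝ᵥ M.mulVec (fun i => (x i).im) := by
  simp only [dotProduct, mulVec, map_apply, Pi.star_apply, Finset.mul_sum,
    Complex.re_sum, ← Finset.sum_add_distrib]
  refine Finset.sum_congr rfl fun i _ => Finset.sum_congr rfl fun j _ => ?_
  simp [Complex.mul_re, Complex.mul_im]

lemma im_dot {n : ℕ} (M : Matrix (Fin n) (Fin n) ℝ) (x : Fin n → ℂ) :
    (star x ⬝ᵥ (M.map Complex.ofReal).mulVec x).im =
      (fun i => (x i).re) ⬝ᵥ M.mulVec (fun i => (x i).im) -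
      (fun i => (x i).im) ⬝ᵥ M.mulVec (fun i => (x i).re) := by
  simp only [dotProduct, mulVec, map_apply, Pi.star_apply, Finset.mul_sum,
    Complex.im_sum, ← Finset.sum_sub_distrib]
  refine Finset.sum_congr rfl fun i _ => Finset.sum_congr rfl fun j _ => ?_
  simp [Complex.mul_re, Complex.mul_im]
  ring

lemma dot_re_pos {n : ℕ} {M : Matrix (Fin n) (Fin n) ℝ} (hM : M.PosDef)
    {x : Fin n → ℂ} (hx : x ≠ 0) :
    0 < (star x ⬝ᵥ (M.map Complex.ofReal).mulVec x).re := by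
  rw [re_dot]
  set a : Fin n → ℝ := fun i => (x i).re
  set b : Fin n → ℝ := fun i => (x i).im
  have hab : a ≠ 0 ∨ b ≠ 0 := by
    by_contra h
    push_neg at h
    apply hx
    funext i
    have ha := congrFun h.1 i
    have hb := congrFun h.2 i
    simp only [a, b, Pi.zero_apply] at ha hb
    exact Complex.ext ha hb
  have pa := hM.posSemidef.dotProduct_mulVec_nonneg a
  have pb := hM.posSemidef.dotProduct_mulVec_nonneg b
  simp only [star_trivial] at pa pb
  rcases hab with h | h
  · have := hM.dotProduct_mulVec_pos h
    simp only [star_trivial] at this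
    linarith
  · have := hM.dotProduct_mulVec_pos h
    simp only [star_trivial] at this
    linarith

lemma dot_im_zero {n : ℕ} {M : Matrix (Fin n) (Fin n) ℝ} (hM : Mᵀ = M)
    (x : Fin n → ℂ) :
    (star x ⬝ᵥ (M.map Complex.ofReal).mulVec x).im = 0 := by
  rw [im_dot]
  have : ∀ u v : Fin n → ℝ, u ⬝ᵥ M.mulVec v = v ⬝ᵥ M.mulVec u := by
    intro u v
    rw [dotProduct_mulVec, ← mulVec_transpose, hM, dotProduct_comm]
  rw [this]
  ring

lemma dot_re_zero {n : ℕ} {M : Matrix (Fin n) (Fin n) ℝ} (hM : Mᵀ = -M)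
    (x : Fin n → ℂ) :
    (star x ⬝ᵥ (M.map Complex.ofReal).mulVec x).re = 0 := by
  rw [re_dot]
  have : ∀ u : Fin n → ℝ, u ⬝ᵥ M.mulVec u = 0 := by
    intro u
    have h1 : u ⬝ᵥ M.mulVec u = -(u ⬝ᵥ M.mulVec u) := by
      conv_lhs => rw [dotProduct_mulVec, ← mulVec_transpose, hM]
      simp [neg_mulVec, dotProduct_comm]
    linarith
  rw [this, this]
  ring

/-- The block matrix B = [[0, I], [-M₀⁻¹K₀, M₀⁻¹(J̄₀-R̄₀)]] with
M₀, K₀ symmetric positive definite, J̄₀ skew-symmetric, R̄₀ symmetric positive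
definite, is Hurwitz. -/
theorem stmt2 {n : ℕ} (M₀ K₀ J₀ R₀ : Matrix (Fin n) (Fin n) ℝ)
    (hM : M₀.PosDef) (hK : K₀.PosDef) (hJ : J₀ᵀ = -J₀) (hR : R₀.PosDef)
    (B : Matrix (Fin n ⊕ Fin n) (Fin n ⊕ Fin n) ℝ)
    (hB : B = Matrix.fromBlocks 0 1 (-(M₀⁻¹ * K₀)) (M₀⁻¹ * (J₀ - R₀))) :
    ∀ μ ∈ spectrum ℂ (B.map Complex.ofReal), μ.re < 0 := by

  intro μ hμ
  -- turn spectrum membership into an eigenvector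
  rw [spectrum.mem_iff] at hμ
  obtain ⟨v, hv0, hveq⟩ := (Matrix.exists_mulVec_eq_zero_iff
      (M := algebraMap ℂ (Matrix (Fin n ⊕ Fin n) (Fin n ⊕ Fin n) ℂ) μ - B.map Complex.ofReal)).2
    (by
      by_contra hdet
      exact hμ ((Matrix.isUnit_iff_isUnit_det _).2 (isUnit_iff_ne_zero.2 hdet)))
  -- extract block structure
  have hA : B.map Complex.ofReal = Matrix.fromBlocks 0 1
      ((-(M₀⁻¹ * K₀)).map Complex.ofReal) ((M₀⁻¹ * (J₀ - R₀)).map Complex.ofReal) := by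
    rw [hB, Matrix.fromBlocks_map,
      Matrix.map_zero _ Complex.ofReal_zero,
      Matrix.map_one _ Complex.ofReal_zero Complex.ofReal_one]
  set x : Fin n → ℂ := fun i => v (Sum.inl i) with hx
  set y : Fin n → ℂ := fun i => v (Sum.inr i) with hy
  have hv : v = Sum.elim x y := by funext i; cases i <;> rfl
  have heig : (B.map Complex.ofReal).mulVec v = μ • v := by
    have := hveq
    rw [Matrix.sub_mulVec, sub_eq_zero] at this
    rw [← this]
    rw [Algebra.algebraMap_eq_smul_one, Matrix.smul_mulVec, Matrix.one_mulVec]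
  rw [hA] at heig
  rw [Matrix.fromBlocks_mulVec] at heig
  have h1 : y = μ • x := by
    funext i
    have h := congrFun heig (Sum.inl i)
    simpa using h
  have h2 : ((-(M₀⁻¹ * K₀)).map Complex.ofReal) *ᵥ x
      + ((M₀⁻¹ * (J₀ - R₀)).map Complex.ofReal) *ᵥ y = μ • y := by
    funext i
    have h := congrFun heig (Sum.inr i)
    simp at h; exact h
  have hx0 : x ≠ 0 := by
    intro h
    apply hv0
    rw [hv, h1, h]
    simp
  set Mc := M₀.map Complex.ofReal with hMc
  set Kc := K₀.map Complex.ofReal with hKc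
  set Jc := J₀.map Complex.ofReal with hJc
  set Rc := R₀.map Complex.ofReal with hRc
  have hdetM : IsUnit M₀.det := hM.det_pos.ne'.isUnit
  have hMK : M₀ * -(M₀⁻¹ * K₀) = -K₀ := by
    rw [mul_neg, ← mul_assoc, Matrix.mul_nonsing_inv _ hdetM, one_mul]
  have hMD : M₀ * (M₀⁻¹ * (J₀ - R₀)) = J₀ - R₀ := by
    rw [← mul_assoc, Matrix.mul_nonsing_inv _ hdetM, one_mul]
  have e1 : Mc * ((-(M₀⁻¹ * K₀)).map Complex.ofReal) = -Kc := by
    have h : (M₀ * -(M₀⁻¹ * K₀)).map Complex.ofReal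
        = Mc * ((-(M₀⁻¹ * K₀)).map Complex.ofReal) :=
      map_mul Complex.ofRealHom.mapMatrix M₀ (-(M₀⁻¹ * K₀))
    rw [← h, hMK]
    exact map_neg Complex.ofRealHom.mapMatrix K₀
  have e2 : Mc * ((M₀⁻¹ * (J₀ - R₀)).map Complex.ofReal) = Jc - Rc := by
    have h : (M₀ * (M₀⁻¹ * (J₀ - R₀))).map Complex.ofReal
        = Mc * ((M₀⁻¹ * (J₀ - R₀)).map Complex.ofReal) :=
      map_mul Complex.ofRealHom.mapMatrix M₀ (M₀⁻¹ * (J₀ - R₀))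
    rw [← h, hMD]
    exact map_sub Complex.ofRealHom.mapMatrix J₀ R₀
  have h3 : μ • (μ • (Mc *ᵥ x)) = -(Kc *ᵥ x) + μ • ((Jc - Rc) *ᵥ x) := by
    have h := congrArg (fun w => Mc *ᵥ w) h2
    simp only [Matrix.mulVec_add, Matrix.mulVec_mulVec, e1, e2,
      Matrix.mulVec_smul, h1, Matrix.neg_mulVec] at h
    rw [← h]
  have key : μ ^ 2 * (star x ⬝ᵥ Mc *ᵥ x) + (star x ⬝ᵥ Kc *ᵥ x)
      + μ * (star x ⬝ᵥ Rc *ᵥ x) = μ * (star x ⬝ᵥ Jc *ᵥ x) := by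
    have h := congrArg (fun w => star x ⬝ᵥ w) h3
    simp only [dotProduct_add, dotProduct_smul, dotProduct_neg, Matrix.sub_mulVec,
      dotProduct_sub, smul_eq_mul] at h
    ring_nf at h ⊢
    linear_combination h
  set m := star x ⬝ᵥ Mc *ᵥ x
  set k := star x ⬝ᵥ Kc *ᵥ x
  set r := star x ⬝ᵥ Rc *ᵥ x
  set j := star x ⬝ᵥ Jc *ᵥ x
  have hMsym : M₀ᵀ = M₀ := by
    have := hM.1
    rwa [Matrix.IsHermitian, Matrix.conjTranspose_eq_transpose_of_trivial] at this
  have hKsym : K₀ᵀ = K₀ := by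
    have := hK.1
    rwa [Matrix.IsHermitian, Matrix.conjTranspose_eq_transpose_of_trivial] at this
  have hRsym : R₀ᵀ = R₀ := by
    have := hR.1
    rwa [Matrix.IsHermitian, Matrix.conjTranspose_eq_transpose_of_trivial] at this
  have hm : 0 < m.re := dot_re_pos hM hx0
  have hk : 0 < k.re := dot_re_pos hK hx0
  have hr : 0 < r.re := dot_re_pos hR hx0
  have hmi : m.im = 0 := dot_im_zero hMsym x
  have hki : k.im = 0 := dot_im_zero hKsym x
  have hri : r.im = 0 := dot_im_zero hRsym x
  have hjr : j.re = 0 := dot_re_zero hJ x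
  have hμ0 : μ ≠ 0 := by
    intro h
    rw [h] at key
    simp at key
    rw [key] at hk
    simp at hk
  have hsq : 0 < μ.re ^ 2 + μ.im ^ 2 := by
    have := Complex.normSq_pos.2 hμ0
    rw [Complex.normSq_apply] at this
    nlinarith
  have hre := congrArg (fun z => (z * (starRingEnd ℂ) μ).re) key
  simp only [Complex.mul_re, Complex.mul_im, Complex.add_re, Complex.add_im,
    Complex.conj_re, Complex.conj_im, pow_two, hmi, hki, hri, hjr] at hre
  by_contra hcon
  push_neg at hcon
  nlinarith [mul_pos hsq hr, mul_nonneg hcon (le_of_lt (add_pos (mul_pos hsq hm) hk)),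
    mul_pos hsq hm, sq_nonneg μ.re, sq_nonneg μ.im]
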